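/- Let T, Q be real symmetric positive definite n×n matrices, R a real n×n matrix, and suppose E ∈ ℂ^{n×n} satisfies T E² − i(R+Rᵀ)E − Q = 0 with Re spec E > 0. Then the matrix M = T E − i Rᵀ is Hermitian. -/

import Mathlib

open Matrix Polynomial


lemma aux_charpoly_eval {n : ℕ} (A : Matrix (Fin n) (Fin n) ℂ) (μ : ℂ) :
    A.charpoly.eval μ = (Matrix.scalar (Fin n) μ - A).det := by
  rw [Matrix.charpoly, _root_.eval_det, matPolyEquiv_charmatrix]
  simp

lemma aux_aeval_comm {n : ℕ} (A B X : Matrix (Fin n) (Fin n) ℂ)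
    (h : A * X = X * B) (p : ℂ[X]) :
    (aeval A p) * X = X * (aeval B p) := by
  induction p using Polynomial.induction_on' with
  | add p q hp hq => simp [map_add, add_mul, mul_add, hp, hq]
  | monomial k c =>
    have hk : ∀ k : ℕ, A ^ k * X = X * B ^ k := by
      intro k
      induction k with
      | zero => simp
      | succ m ih => rw [pow_succ, pow_succ, mul_assoc, h, ← mul_assoc, ih, mul_assoc]
    simp [aeval_monomial, Algebra.algebraMap_eq_smul_one, mul_assoc, smul_mul_assoc,
      mul_smul_comm, hk k]

lemma aux_sylvester {n : ℕ} (A B X : Matrix (Fin n) (Fin n) ℂ)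
    (h : A * X = X * B) (hu : IsUnit (aeval B A.charpoly)) : X = 0 := by
  have := aux_aeval_comm A B X h A.charpoly
  rw [A.aeval_self_charpoly, zero_mul] at this
  obtain ⟨u, hu⟩ := hu
  have hx : X * (u : Matrix (Fin n) (Fin n) ℂ) = 0 := by rw [hu]; exact this.symm
  calc X = X * (u : Matrix (Fin n) (Fin n) ℂ) * (↑u⁻¹ : Matrix (Fin n) (Fin n) ℂ) := by
        rw [mul_assoc, ← Units.val_mul, mul_inv_cancel, Units.val_one, mul_one]
    _ = 0 := by rw [hx, zero_mul]


/-- if `T, Q` are real symmetric positive definite, `R` real, and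
`E ∈ ℂ^{n×n}` satisfies `T E² − i(R+Rᵀ)E − Q = 0` with `Re spec E > 0`, then
`M = T E − i Rᵀ` is Hermitian. -/
theorem stmt9 (n : ℕ) (T Q R : Matrix (Fin n) (Fin n) ℝ)
    (hT : T.PosDef) (hQ : Q.PosDef)
    (E : Matrix (Fin n) (Fin n) ℂ)
    (hE : ∀ μ ∈ spectrum ℂ E, 0 < μ.re)
    (heq : (T.map (Complex.ofReal)) * E ^ 2
        - Complex.I • (((R + Rᵀ).map Complex.ofReal) * E)
        - Q.map Complex.ofReal = 0) :
    ((T.map Complex.ofReal) * E - Complex.I • (Rᵀ.map Complex.ofReal)).IsHermitian := by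
  rcases Nat.eq_zero_or_pos n with hn | hn
  · subst hn; exact Subsingleton.elim _ _
  set Tc := T.map (Complex.ofReal) with hTc
  set Qc := Q.map (Complex.ofReal) with hQc
  set Rc := R.map (Complex.ofReal) with hRc
  set M : Matrix (Fin n) (Fin n) ℂ := Tc * E - Complex.I • (Rᵀ.map Complex.ofReal) with hM
  -- conjTranspose facts
  have hmapH : ∀ S : Matrix (Fin n) (Fin n) ℝ, (S.map Complex.ofReal)ᴴ = Sᵀ.map Complex.ofReal := by
    intro S; ext i j
    simp [Matrix.conjTranspose_apply, Complex.conj_ofReal]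
  have hTt : Tᵀ = T := by
    have := hT.1.eq
    rwa [Matrix.conjTranspose_eq_transpose_of_trivial] at this
  have hQt : Qᵀ = Q := by
    have := hQ.1.eq
    rwa [Matrix.conjTranspose_eq_transpose_of_trivial] at this
  have hTcH : Tcᴴ = Tc := by rw [hTc, hmapH, hTt]
  have hQcH : Qcᴴ = Qc := by rw [hQc, hmapH, hQt]
  have hAcH : (((R + Rᵀ).map Complex.ofReal))ᴴ = (R + Rᵀ).map Complex.ofReal := by
    rw [hmapH, Matrix.transpose_add, Matrix.transpose_transpose, add_comm]
  have hRcH : (Rᵀ.map Complex.ofReal)ᴴ = Rc := by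
    rw [hmapH, Matrix.transpose_transpose, hRc]
  -- the two Riccati identities
  have h1 : Tc * E ^ 2 - Complex.I • (((R + Rᵀ).map Complex.ofReal) * E) = Qc :=
    sub_eq_zero.mp heq
  have h2 : (Eᴴ) ^ 2 * Tc + Complex.I • (Eᴴ * ((R + Rᵀ).map Complex.ofReal)) = Qc := by
    have := congrArg Matrix.conjTranspose h1
    simpa [Matrix.conjTranspose_sub, Matrix.conjTranspose_mul, Matrix.conjTranspose_smul,
      Matrix.conjTranspose_pow, hTcH, hQcH, hAcH, Complex.star_def, Complex.conj_I,
      neg_smul, sub_neg_eq_add] using this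
  -- M conj transpose
  have hMH : Mᴴ = Eᴴ * Tc + Complex.I • Rc := by
    rw [hM, Matrix.conjTranspose_sub, Matrix.conjTranspose_mul, hTcH,
      Matrix.conjTranspose_smul, hRcH, Complex.star_def, Complex.conj_I, neg_smul,
      sub_neg_eq_add]
  set X : Matrix (Fin n) (Fin n) ℂ := M - Mᴴ with hX
  -- the Lyapunov/Sylvester equation
  have key : Eᴴ * X = X * (-E) := by
    have expand : Eᴴ * X + X * E =
        (Tc * E ^ 2 - Complex.I • (((R + Rᵀ).map Complex.ofReal) * E))
          - ((Eᴴ) ^ 2 * Tc + Complex.I • (Eᴴ * ((R + Rᵀ).map Complex.ofReal))) := by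
      have hmap_add : (R + Rᵀ).map Complex.ofReal
          = R.map Complex.ofReal + Rᵀ.map Complex.ofReal := by
        ext i j; simp
      rw [hX, hMH, hM]
      simp only [hmap_add, hRc, Matrix.mul_add, Matrix.add_mul, smul_add]
      noncomm_ring
    rw [mul_neg, eq_neg_iff_add_eq_zero]
    rw [expand, h1, h2, sub_self]
  -- the unit
  have hunit : IsUnit (Polynomial.aeval (-E) (Eᴴ).charpoly) := by
    apply spectrum.isUnit_of_zero_notMem (R := ℂ)
    intro h0
    rw [spectrum.map_polynomial_aeval_of_degree_pos (-E) (Eᴴ).charpoly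
      (by rw [Matrix.charpoly_degree_eq_dim]; simpa using hn)] at h0
    obtain ⟨μ, hμmem, hμeval⟩ := h0
    have hμE : -μ ∈ spectrum ℂ E := by
      rw [← spectrum.neg_eq] at hμmem
      simpa using hμmem
    have hre : μ.re < 0 := by
      have := hE _ hμE
      simp only [Complex.neg_re] at this
      linarith
    -- star μ is not in the spectrum of E
    have hstar : (starRingEnd ℂ) μ ∉ spectrum ℂ E := by
      intro hmem
      have := hE _ hmem
      simp only [Complex.conj_re] at this
      linarith
    have hdet : IsUnit ((algebraMap ℂ (Matrix (Fin n) (Fin n) ℂ)) ((starRingEnd ℂ) μ) - E) :=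
      spectrum.notMem_iff.mp hstar
    have hdet' : ((algebraMap ℂ (Matrix (Fin n) (Fin n) ℂ)) ((starRingEnd ℂ) μ) - E).det ≠ 0 :=
      ((Matrix.isUnit_iff_isUnit_det _).mp hdet).ne_zero
    apply hdet'
    have hCT : Matrix.scalar (Fin n) μ - Eᴴ =
        ((algebraMap ℂ (Matrix (Fin n) (Fin n) ℂ)) ((starRingEnd ℂ) μ) - E)ᴴ := by
      rw [Matrix.conjTranspose_sub]
      congr 1
      ext i j
      simp [Matrix.scalar_apply, Matrix.algebraMap_matrix_apply, Matrix.conjTranspose_apply,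
        Matrix.diagonal_apply, eq_comm (a := i) (b := j)]
      split_ifs with h <;> simp_all
    have h5 : (Eᴴ).charpoly.eval μ = 0 := hμeval
    rw [aux_charpoly_eval, hCT, Matrix.det_conjTranspose] at h5
    simpa using h5
  have hX0 : X = 0 := aux_sylvester Eᴴ (-E) X key hunit
  have : M = Mᴴ := by
    have := sub_eq_zero.mp hX0
    exact this
  exact this.symm
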